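/- Let σ be the involutive automorphism of ℍ with σ(a+bi+cj+dk) = a+bi+ε(cj+dk) for ε ∈ {1,-1}, applied entrywise to matrices. If complex matrices A, B (viewed as quaternion matrices over the subfield ℝ+ℝi) and complex matrices Z₁, Z₂ satisfy Z₁ - AZ₁B = C₁ and Z₂ - εAZ₂B̄ = C₂, then the quaternion matrix X = Z₁ + Z₂j satisfies X - A·σ(X)·B = C₁ + C₂j. -/

import Mathlib

open Matrix Quaternion

/-- The embedding of ℂ into ℍ as the subfield ℝ + ℝi. -/
def cq (z : ℂ) : ℍ[ℝ] := ⟨z.re, z.im, 0, 0⟩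

/-- The quaternion unit j. -/
def jq : ℍ[ℝ] := ⟨0, 0, 1, 0⟩

def cqHom : ℂ →+* ℍ[ℝ] where
  toFun := cq
  map_one' := by ext <;> simp [cq]
  map_zero' := by ext <;> simp [cq]
  map_add' z w := by ext <;> simp only [Quaternion.re_add, Quaternion.imI_add, Quaternion.imJ_add, Quaternion.imK_add] <;> simp [cq]
  map_mul' z w := by ext <;> simp only [Quaternion.re_mul, Quaternion.imI_mul, Quaternion.imJ_mul, Quaternion.imK_mul] <;> simp [cq, Complex.mul_re, Complex.mul_im]

lemma cq_mul (a b : ℂ) : cq (a * b) = cq a * cq b := map_mul cqHom a b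

lemma cq_sum {ι : Type*} (s : Finset ι) (f : ι → ℂ) :
    cq (∑ x ∈ s, f x) = ∑ x ∈ s, cq (f x) := map_sum cqHom f s

lemma jq_mul_cq (w : ℂ) : jq * cq w = cq (starRingEnd ℂ w) * jq := by
  ext <;> simp only [Quaternion.re_mul, Quaternion.imI_mul, Quaternion.imJ_mul, Quaternion.imK_mul] <;> simp [cq, jq]

section mats
variable {m n p : ℕ}

lemma L1 (M : Matrix (Fin m) (Fin n) ℂ) :
    M.map cq * jq • (1 : Matrix (Fin n) (Fin n) ℍ[ℝ]) = M.map (fun z => cq z * jq) := by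
  refine Matrix.ext fun i j => ?_
  simp [Matrix.mul_apply, Matrix.one_apply, mul_ite, mul_zero, Finset.sum_ite_eq']

lemma L5 (A : Matrix (Fin m) (Fin p) ℂ) (M : Matrix (Fin p) (Fin n) ℂ) :
    (A * M).map cq = A.map cq * M.map cq := by
  refine Matrix.ext fun i j => ?_
  simp [Matrix.mul_apply, Matrix.map_apply, cq_sum, cq_mul]

lemma L6 (M : Matrix (Fin m) (Fin n) ℂ) (B : Matrix (Fin n) (Fin n) ℂ) :
    M.map (fun z => cq z * jq) * B.map cq
      = (M * B.map (starRingEnd ℂ)).map (fun z => cq z * jq) := by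
  refine Matrix.ext fun i j => ?_
  simp only [Matrix.mul_apply, Matrix.map_apply, cq_sum, cq_mul, Finset.sum_mul]
  refine Finset.sum_congr rfl fun k _ => ?_
  conv_lhs => rw [mul_assoc, jq_mul_cq, ← mul_assoc]

lemma L7 (A : Matrix (Fin m) (Fin p) ℂ) (M : Matrix (Fin p) (Fin n) ℂ) :
    A.map cq * M.map (fun z => cq z * jq) = (A * M).map (fun z => cq z * jq) := by
  refine Matrix.ext fun i j => ?_
  simp only [Matrix.mul_apply, Matrix.map_apply, cq_sum, cq_mul, Finset.sum_mul]
  refine Finset.sum_congr rfl fun k _ => ?_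
  rw [mul_assoc]

lemma Lsub_cq (M N : Matrix (Fin m) (Fin n) ℂ) :
    (M - N).map cq = M.map cq - N.map cq := by
  refine Matrix.ext fun i j => ?_
  simp [Matrix.map_apply, map_sub cqHom]
  exact map_sub cqHom _ _

lemma Lsub_f (M N : Matrix (Fin m) (Fin n) ℂ) :
    (M - N).map (fun z => cq z * jq) = M.map (fun z => cq z * jq) - N.map (fun z => cq z * jq) := by
  refine Matrix.ext fun i j => ?_
  simp only [Matrix.map_apply, Matrix.sub_apply, map_sub cqHom, sub_mul]
  rw [show cq (M i j - N i j) = cq (M i j) - cq (N i j) from map_sub cqHom _ _, sub_mul]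

lemma Lsmul_f (c : ℂ) (M : Matrix (Fin m) (Fin n) ℂ) :
    (c • M).map (fun z => cq z * jq) = M.map (fun z => cq (c * z) * jq) := by
  refine Matrix.ext fun i j => ?_
  simp [Matrix.map_apply]

end mats

theorem complex_pair_gives_quaternion_solution {m n : ℕ}
    (ε : ℝ) (hε : ε = 1 ∨ ε = -1)
    (σ : ℍ[ℝ] → ℍ[ℝ])
    (hσ : ∀ q : ℍ[ℝ], σ q = ⟨q.re, q.imI, ε * q.imJ, ε * q.imK⟩)
    (A : Matrix (Fin m) (Fin m) ℂ) (B : Matrix (Fin n) (Fin n) ℂ)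
    (C₁ C₂ Z₁ Z₂ : Matrix (Fin m) (Fin n) ℂ)
    (h1 : Z₁ - A * Z₁ * B = C₁)
    (h2 : Z₂ - (ε : ℂ) • (A * Z₂ * B.map (starRingEnd ℂ)) = C₂) :
    (Z₁.map cq + Z₂.map cq * jq • (1 : Matrix (Fin n) (Fin n) ℍ[ℝ])) -
        A.map cq *
          ((Z₁.map cq + Z₂.map cq * jq • (1 : Matrix (Fin n) (Fin n) ℍ[ℝ])).map σ) *
          B.map cq =
      C₁.map cq + C₂.map cq * jq • (1 : Matrix (Fin n) (Fin n) ℍ[ℝ]) := by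
  rw [L1 Z₂, L1 C₂]
  have hmapσ : (Z₁.map cq + Z₂.map (fun z => cq z * jq)).map σ
      = Z₁.map cq + ((ε:ℂ) • Z₂).map (fun z => cq z * jq) := by
    refine Matrix.ext fun i j => ?_
    simp only [Matrix.map_apply, Matrix.add_apply, Matrix.smul_apply, hσ]
    ext <;> simp only [Quaternion.re_add, Quaternion.imI_add, Quaternion.imJ_add, Quaternion.imK_add, Quaternion.re_mul, Quaternion.imI_mul, Quaternion.imJ_mul, Quaternion.imK_mul] <;> simp [cq, jq, Complex.ofReal_mul] <;> ring
  have key : ((ε:ℂ) • (A * Z₂ * B.map (starRingEnd ℂ))).map (fun z => cq z * jq)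
      = (A * ((ε:ℂ) • Z₂) * B.map (starRingEnd ℂ)).map (fun z => cq z * jq) := by
    rw [Matrix.mul_smul, Matrix.smul_mul]
  rw [hmapσ, Matrix.mul_add, Matrix.add_mul, L7, L6, key.symm, ← L5 A Z₁,
    ← L5 (A * Z₁) B, ← h1, ← h2, Lsub_cq, Lsub_f]
  abel
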